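/- Let M be a Puiseux monoid with an approximation (M_i)_{i≥1}. Then the sequence (ρ(M_i))_{i≥1} is nondecreasing and lim_{i→∞} ρ(M_i) = ρ(M) in ℝ ∪ {∞}. -/

import Mathlib

open scoped NNRat ENNReal

/-- The set of atoms of a Puiseux monoid (additive submonoid of `ℚ≥0`). -/
def PMatoms (M : AddSubmonoid ℚ≥0) : Set ℚ≥0 :=
  {a | a ∈ M ∧ a ≠ 0 ∧ ∀ y ∈ M, ∀ z ∈ M, y ≠ 0 → z ≠ 0 → a ≠ y + z}

/-- A Puiseux monoid is atomic if it is generated by its atoms. -/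
def PMatomic (M : AddSubmonoid ℚ≥0) : Prop :=
  ∀ x ∈ M, x ∈ AddSubmonoid.closure (PMatoms M)

/-- The set of factorizations of `x` in `M`: multisets of atoms summing to `x`. -/
def PMfactorizations (M : AddSubmonoid ℚ≥0) (x : ℚ≥0) : Set (Multiset ℚ≥0) :=
  {s | (∀ a ∈ s, a ∈ PMatoms M) ∧ s.sum = x}

/-- The set of lengths of `x` in `M`. -/
def PMlengths (M : AddSubmonoid ℚ≥0) (x : ℚ≥0) : Set ℕ :=
  Multiset.card '' PMfactorizations M x

/-- The elasticity of an element: `sup L(x) / inf L(x)` in `ℝ≥0∞`, `1` for `x = 0`. -/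
noncomputable def PMelasticityOf (M : AddSubmonoid ℚ≥0) (x : ℚ≥0) : ℝ≥0∞ :=
  if x = 0 then 1
  else sSup ((fun n : ℕ => (n : ℝ≥0∞)) '' PMlengths M x) /
       sInf ((fun n : ℕ => (n : ℝ≥0∞)) '' PMlengths M x)

/-- The elasticity of a Puiseux monoid. -/
noncomputable def PMelasticity (M : AddSubmonoid ℚ≥0) : ℝ≥0∞ :=
  ⨆ x ∈ M, PMelasticityOf M x

/-- The union of sets of lengths containing `n`. -/
def PMunionOfLengths (M : AddSubmonoid ℚ≥0) (n : ℕ) : Set ℕ :=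
  {m | ∃ x : ℚ≥0, n ∈ PMlengths M x ∧ m ∈ PMlengths M x}

/-- The `n`-th local elasticity `ρ_n(M) = sup U_n(M)` in `ℝ≥0∞`. -/
noncomputable def PMlocalElasticity (M : AddSubmonoid ℚ≥0) (n : ℕ) : ℝ≥0∞ :=
  sSup ((fun m : ℕ => (m : ℝ≥0∞)) '' PMunionOfLengths M n)

/-- The set of distances of an element `x` of `M`. -/
def PMdistances (M : AddSubmonoid ℚ≥0) (x : ℚ≥0) : Set ℕ :=
  {d | 0 < d ∧ ∃ l ∈ PMlengths M x,
    PMlengths M x ∩ Set.Icc l (l + d) = {l, l + d}}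

/-- The set of distances (delta set) of `M`. -/
def PMDelta (M : AddSubmonoid ℚ≥0) : Set ℕ :=
  ⋃ x ∈ {y : ℚ≥0 | y ∈ M ∧ y ≠ 0}, PMdistances M x

/-- `(Mi)` is an approximation of `M`: an increasing sequence of atomic submonoids
with union `M` and increasing sets of atoms. -/
def PMapprox (M : AddSubmonoid ℚ≥0) (Mi : ℕ → AddSubmonoid ℚ≥0) : Prop :=
  (∀ i, Mi i ≤ Mi (i + 1)) ∧ (∀ i, PMatomic (Mi i)) ∧
  (∀ i, PMatoms (Mi i) ⊆ PMatoms (Mi (i + 1))) ∧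
  (∀ x, x ∈ M ↔ ∃ i, x ∈ Mi i)

section Aux

variable {M : AddSubmonoid ℚ≥0} {Mi : ℕ → AddSubmonoid ℚ≥0}

lemma PM.mono_le (h : PMapprox M Mi) : Monotone Mi :=
  monotone_nat_of_le_succ h.1

lemma PM.atoms_mono (h : PMapprox M Mi) {i j : ℕ} (hij : i ≤ j) :
    PMatoms (Mi i) ⊆ PMatoms (Mi j) := by
  induction hij with
  | refl => exact subset_rfl
  | step _ ih => exact ih.trans (h.2.2.1 _)

lemma PM.mem_M (h : PMapprox M Mi) {x : ℚ≥0} {i : ℕ} (hx : x ∈ Mi i) : x ∈ M :=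
  (h.2.2.2 x).2 ⟨i, hx⟩

lemma PM.atoms_sub (h : PMapprox M Mi) (i : ℕ) : PMatoms (Mi i) ⊆ PMatoms M := by
  rintro a ⟨haM, ha0, hsum⟩
  refine ⟨PM.mem_M h haM, ha0, ?_⟩
  intro y hy z hz hy0 hz0
  obtain ⟨j, hyj⟩ := (h.2.2.2 y).1 hy
  obtain ⟨k, hzk⟩ := (h.2.2.2 z).1 hz
  have ha' := PM.atoms_mono h (le_max_left i (max j k)) ⟨haM, ha0, hsum⟩
  exact ha'.2.2 y (PM.mono_le h ((le_max_left j k).trans (le_max_right i _)) hyj)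
    z (PM.mono_le h ((le_max_right j k).trans (le_max_right i _)) hzk) hy0 hz0

lemma PM.atom_of_mem (h : PMapprox M Mi) {a : ℚ≥0} {i : ℕ}
    (haM : a ∈ PMatoms M) (hai : a ∈ Mi i) : a ∈ PMatoms (Mi i) :=
  ⟨hai, haM.2.1, fun y hy z hz hy0 hz0 =>
    haM.2.2 y (PM.mem_M h hy) z (PM.mem_M h hz) hy0 hz0⟩

lemma PM.lengths_mono {N N' : AddSubmonoid ℚ≥0} (hA : PMatoms N ⊆ PMatoms N')
    (x : ℚ≥0) : PMlengths N x ⊆ PMlengths N' x := by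
  rintro n ⟨s, ⟨hs, hsum⟩, rfl⟩
  exact ⟨s, ⟨fun a ha => hA (hs a ha), hsum⟩, rfl⟩

lemma PM.elasticityOf_mono {N N' : AddSubmonoid ℚ≥0} {x : ℚ≥0}
    (hL : PMlengths N x ⊆ PMlengths N' x) :
    PMelasticityOf N x ≤ PMelasticityOf N' x := by
  unfold PMelasticityOf
  split
  · exact le_rfl
  · exact ENNReal.div_le_div (sSup_le_sSup (Set.image_mono hL))
      (sInf_le_sInf (Set.image_mono hL))

lemma PM.exists_index (h : PMapprox M Mi) (u : Multiset ℚ≥0)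
    (hu : ∀ a ∈ u, a ∈ PMatoms M) : ∃ i, ∀ a ∈ u, a ∈ PMatoms (Mi i) := by
  induction u using Multiset.induction with
  | empty => exact ⟨0, fun a ha => absurd ha (Multiset.notMem_zero a)⟩
  | cons a u ih =>
    obtain ⟨i, hi⟩ := ih fun b hb => hu b (Multiset.mem_cons_of_mem hb)
    have haM : a ∈ PMatoms M := hu a (Multiset.mem_cons_self a u)
    obtain ⟨j, hj⟩ := (h.2.2.2 a).1 haM.1
    refine ⟨max i j, fun b hb => ?_⟩
    rcases Multiset.mem_cons.1 hb with rfl | hb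
    · exact PM.atom_of_mem h haM (PM.mono_le h (le_max_right i j) hj)
    · exact PM.atoms_mono h (le_max_left i j) (hi b hb)

lemma PM.elasticity_le (h : PMapprox M Mi) (i : ℕ) :
    PMelasticity (Mi i) ≤ PMelasticity M := by
  refine iSup₂_le fun x hx => ?_
  exact (PM.elasticityOf_mono (PM.lengths_mono (PM.atoms_sub h i) x)).trans
    (le_iSup₂_of_le x (PM.mem_M h hx) le_rfl)

lemma PM.elasticity_M_le (h : PMapprox M Mi) :
    PMelasticity M ≤ ⨆ i, PMelasticity (Mi i) := by
  refine iSup₂_le fun x hx => ?_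
  by_cases hx0 : x = 0
  · subst hx0
    refine le_iSup_of_le 0 ?_
    refine le_iSup₂_of_le (0 : ℚ≥0) (zero_mem _) ?_
    simp [PMelasticityOf]
  · rw [PMelasticityOf, if_neg hx0]
    rcases Set.eq_empty_or_nonempty (PMlengths M x) with hL | hL
    · simp [hL]
    · have hmem : sInf (PMlengths M x) ∈ PMlengths M x := Nat.sInf_mem hL
      set m := sInf (PMlengths M x) with hm
      have hInf : sInf ((fun n : ℕ => (n : ℝ≥0∞)) '' PMlengths M x) = (m : ℝ≥0∞) := by
        refine le_antisymm (sInf_le ⟨m, hmem, rfl⟩) (le_sInf ?_)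
        rintro _ ⟨n, hn, rfl⟩
        exact_mod_cast Nat.cast_le.2 (Nat.sInf_le hn)
      rw [hInf, sSup_image, ENNReal.iSup_div]
      refine iSup_le fun n => ?_
      rw [ENNReal.iSup_div]
      refine iSup_le fun hn => ?_
      obtain ⟨s, ⟨hs, hssum⟩, hscard⟩ := hn
      obtain ⟨t, ⟨ht, htsum⟩, htcard⟩ := hmem
      obtain ⟨i, hi⟩ := PM.exists_index h (s + t) fun a ha => by
        rcases Multiset.mem_add.1 ha with ha | ha
        · exact hs a ha
        · exact ht a ha
      have hsi : ∀ a ∈ s, a ∈ PMatoms (Mi i) := fun a ha =>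
        hi a (Multiset.mem_add.2 (Or.inl ha))
      have hti : ∀ a ∈ t, a ∈ PMatoms (Mi i) := fun a ha =>
        hi a (Multiset.mem_add.2 (Or.inr ha))
      have hxMi : x ∈ Mi i := by
        rw [← hssum]
        exact AddSubmonoid.multiset_sum_mem _ s fun a ha => (hsi a ha).1
      have hnL : n ∈ PMlengths (Mi i) x := ⟨s, ⟨hsi, hssum⟩, hscard⟩
      have hmL : m ∈ PMlengths (Mi i) x := ⟨t, ⟨hti, htsum⟩, htcard⟩
      have key : (n : ℝ≥0∞) / (m : ℝ≥0∞) ≤ PMelasticityOf (Mi i) x := by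
        rw [PMelasticityOf, if_neg hx0]
        exact ENNReal.div_le_div (le_sSup ⟨n, hnL, rfl⟩) (sInf_le ⟨m, hmL, rfl⟩)
      exact key.trans ((le_iSup₂_of_le x hxMi le_rfl).trans
        (le_iSup (fun i => PMelasticity (Mi i)) i))

end Aux

theorem stmt4 (M : AddSubmonoid ℚ≥0) (Mi : ℕ → AddSubmonoid ℚ≥0)
    (h : PMapprox M Mi) :
    Monotone (fun i : ℕ => PMelasticity (Mi i)) ∧
    Filter.Tendsto (fun i : ℕ => PMelasticity (Mi i)) Filter.atTop
      (nhds (PMelasticity M)) := by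
  have hmono : Monotone fun i : ℕ => PMelasticity (Mi i) := by
    refine monotone_nat_of_le_succ fun i => ?_
    refine iSup₂_le fun x hx => ?_
    exact (PM.elasticityOf_mono (PM.lengths_mono (h.2.2.1 i) x)).trans
      (le_iSup₂_of_le x (h.1 i hx) le_rfl)
  refine ⟨hmono, ?_⟩
  have heq : (⨆ i, PMelasticity (Mi i)) = PMelasticity M :=
    le_antisymm (iSup_le fun i => PM.elasticity_le h i) (PM.elasticity_M_le h)
  have := tendsto_atTop_iSup hmono
  rwa [heq] at this
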